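/- Let A be a finite set with |A| = n ≥ 1, let f : A → B be a function into a finite set B with |B| = n − ℓ for an integer ℓ ≥ 0, let c ≥ 0, let Π be a probability distribution on A with 1/(n(1+c)) ≤ Π(x) ≤ (1+c)/n for all x ∈ A, and let 1 ≤ k ≤ n. Let P_seq be the probability distribution on k-tuples (x_1,…,x_k) of pairwise distinct elements of A given by P_seq(x_1,…,x_k) := ∏_{t=1}^{k} Π(x_t)/(1 − ∑_{j=1}^{t−1} Π(x_j)) (sequential weighted sampling without replacement), and let (X_1,…,X_k) be distributed according to P_seq. Let E_k^seq be the event that f(X_i) ≠ f(X_j) for all i ≠ j. Then Pr[E_k^seq] ≤ 2·exp(−ℓ·(1 − exp(−k/(n(1+c))))²) ≤ 2·exp(−k²·ℓ/(4·n²·(1+c)²)). -/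

import Mathlib

open Finset

/-- exponential martingale coefficient sequence -/
noncomputable def aSeq (q : ℝ) : ℕ → ℝ
  | 0 => 0
  | (u+1) => aSeq q u + q * (2 * Real.exp (-(aSeq q u)) - 1)

noncomputable def bSeq (q L : ℝ) (u : ℕ) : ℝ :=
  ∑ v ∈ Finset.range u, 2 * q * (1 - Real.exp (-(aSeq q v))) * L

lemma exp_neg_le_inv {z : ℝ} (hz : 0 ≤ z) : Real.exp (-z) ≤ 1 / (1 + z) := by
  rw [Real.exp_neg, one_div]
  apply inv_anti₀ (by linarith)
  have := Real.add_one_le_exp z; linarith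

lemma one_sub_le_exp_neg (z : ℝ) : 1 - z ≤ Real.exp (-z) := by
  have := Real.add_one_le_exp (-z); linarith

lemma aSeq_exp_bounds {q : ℝ} (hq0 : 0 < q) (hq2 : q ≤ 1/2) (u : ℕ) :
    1/2 ≤ Real.exp (-(aSeq q u)) ∧ Real.exp (-(aSeq q u)) ≤ 1 := by
  induction u with
  | zero => norm_num [aSeq]
  | succ u ih =>
    obtain ⟨h1, h2⟩ := ih
    set y := Real.exp (-(aSeq q u)) with hy
    have hstep : Real.exp (-(aSeq q (u+1))) = y * Real.exp (-(q * (2*y - 1))) := by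
      rw [show aSeq q (u+1) = aSeq q u + q * (2 * Real.exp (-(aSeq q u)) - 1) from rfl]
      rw [neg_add, Real.exp_add, ← hy]
    constructor
    · rw [hstep]
      have h3 : 1 - q * (2*y-1) ≤ Real.exp (-(q * (2*y-1))) := one_sub_le_exp_neg _
      have h4 : y * (1 - q*(2*y-1)) ≤ y * Real.exp (-(q * (2*y-1))) := by
        apply mul_le_mul_of_nonneg_left h3 (by positivity)
      have h5 : (1:ℝ)/2 ≤ y * (1 - q*(2*y-1)) := by nlinarith [sq_nonneg (2*y-1)]
      linarith
    · rw [hstep]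
      have h3 : Real.exp (-(q * (2*y - 1))) ≤ 1 := by
        rw [Real.exp_le_one_iff]
        nlinarith
      nlinarith

/-- monotonicity of t ↦ t·exp(−2qt) on (0, 1] for q ≤ 1/2 -/
lemma mono_texp {q t₁ t₂ : ℝ} (hq0 : 0 < q) (hq2 : q ≤ 1/2) (h1 : 0 < t₁)
    (h12 : t₁ ≤ t₂) (h2 : t₂ ≤ 1) :
    t₁ * Real.exp (-(2*q*t₁)) ≤ t₂ * Real.exp (-(2*q*t₂)) := by
  have key : t₁ ≤ t₂ * Real.exp (-(2*q*(t₂ - t₁))) := by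
    have h3 : 1 - 2*q*(t₂-t₁) ≤ Real.exp (-(2*q*(t₂-t₁))) := one_sub_le_exp_neg _
    nlinarith [mul_nonneg (mul_nonneg (by linarith : (0:ℝ) ≤ 2*q) (by linarith : 0 ≤ t₂ - t₁)) (by linarith : 0 ≤ 1 - t₂)]
  calc t₁ * Real.exp (-(2*q*t₁)) ≤ (t₂ * Real.exp (-(2*q*(t₂ - t₁)))) * Real.exp (-(2*q*t₁)) := by
        apply mul_le_mul_of_nonneg_right key (Real.exp_nonneg _)
    _ = t₂ * Real.exp (-(2*q*t₂)) := by
        rw [mul_assoc, ← Real.exp_add]; ring_nf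

/-- lower bound on aSeq: exp(−aSeq u) ≤ 1/(2 − exp(−q)^u) -/
lemma aSeq_exp_le {q : ℝ} (hq0 : 0 < q) (hq2 : q ≤ 1/2) (u : ℕ) :
    Real.exp (-(aSeq q u)) ≤ 1 / (2 - Real.exp (-q) ^ u) := by
  have hr0 : 0 < Real.exp (-q) := Real.exp_pos _
  have hr1 : Real.exp (-q) < 1 := by
    rw [Real.exp_lt_one_iff]; linarith
  induction u with
  | zero => norm_num [aSeq]
  | succ u ih =>
    have hx1 : Real.exp (-q) ^ u ≤ 1 := pow_le_one₀ (le_of_lt hr0) (le_of_lt hr1)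
    have hx0 : 0 < Real.exp (-q) ^ u := pow_pos hr0 u
    set x := Real.exp (-q) ^ u with hxdef
    have hden : (1:ℝ) ≤ 2 - x := by linarith
    have hρ1 : 1 / (2 - x) ≤ 1 := by
      rw [div_le_one (by linarith)]; linarith
    have hρ0 : 0 < 1 / (2 - x) := by positivity
    obtain ⟨hy1, hy2⟩ := aSeq_exp_bounds hq0 hq2 u
    set y := Real.exp (-(aSeq q u)) with hy
    have hstep : Real.exp (-(aSeq q (u+1))) = Real.exp q * (y * Real.exp (-(2*q*y))) := by
      rw [show aSeq q (u+1) = aSeq q u + q * (2 * Real.exp (-(aSeq q u)) - 1) from rfl]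
      rw [← hy, neg_add, Real.exp_add, show -(q*(2*y-1)) = q + -(2*q*y) from by ring,
        Real.exp_add, ← hy]
      ring
    rw [hstep]
    have hmono : y * Real.exp (-(2*q*y)) ≤ (1/(2-x)) * Real.exp (-(2*q*(1/(2-x)))) :=
      mono_texp hq0 hq2 (by linarith) ih hρ1
    have hcomb : Real.exp q * ((1/(2-x)) * Real.exp (-(2*q*(1/(2-x))))) ≤ 1 / (2 - Real.exp (-q) ^ (u+1)) := by
      have e1 : Real.exp q * Real.exp (-(2*q*(1/(2-x)))) = Real.exp (-(q*x/(2-x))) := by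
        rw [← Real.exp_add]
        congr 1
        field_simp
        ring
      have e2 : Real.exp (-(q*x/(2-x))) ≤ 1 / (1 + q*x/(2-x)) := by
        apply exp_neg_le_inv
        positivity
      have e3 : Real.exp q * ((1/(2-x)) * Real.exp (-(2*q*(1/(2-x))))) =
          (1/(2-x)) * (Real.exp q * Real.exp (-(2*q*(1/(2-x))))) := by ring
      rw [e3, e1]
      calc (1/(2-x)) * Real.exp (-(q*x/(2-x))) ≤ (1/(2-x)) * (1 / (1 + q*x/(2-x))) := by
            apply mul_le_mul_of_nonneg_left e2 (le_of_lt hρ0)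
        _ = 1 / (2 - x + q*x) := by
            have h9 : (2-x)*(1+q*x/(2-x)) = 2-x+q*x := by
              field_simp
            rw [div_mul_div_comm, one_mul, h9]
        _ ≤ 1 / (2 - Real.exp (-q) ^ (u+1)) := by
            have hpow : Real.exp (-q) ^ (u+1) = x * Real.exp (-q) := by
              rw [pow_succ]
            have h5 : 1 - q ≤ Real.exp (-q) := one_sub_le_exp_neg q
            rw [hpow]
            apply one_div_le_one_div_of_le
            · nlinarith [Real.exp_pos (-q)]
            · nlinarith
    calc Real.exp q * (y * Real.exp (-(2*q*y))) ≤ Real.exp q * ((1/(2-x)) * Real.exp (-(2*q*(1/(2-x))))) := by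
          apply mul_le_mul_of_nonneg_left hmono (Real.exp_nonneg _)
      _ ≤ 1 / (2 - Real.exp (-q) ^ (u+1)) := hcomb

lemma per_term_ineq {q r x : ℝ} (hq0 : 0 < q) (hq2 : q ≤ 1/2) (hr1 : 1 - q ≤ r)
    (hr2 : r ≤ 1) (hx0 : 0 < x) (hx1 : x ≤ 1) :
    (1 - r*x)^2 - (1-x)^2 ≤ 2*q*(1-x)/(2-x) + q^2*x^2 := by
  have key1 : x*(1-x) ≤ (1-x)/(2-x) := by
    rw [le_div_iff₀ (by linarith : (0:ℝ) < 2-x)]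
    nlinarith [sq_nonneg (1-x), mul_nonneg (by linarith : (0:ℝ) ≤ 1-x) (sq_nonneg (1-x))]
  have e : (1 - r*x)^2 - (1-x)^2 = 2*x*(1-x)*(1-r) + x^2*(1-r)^2 := by ring
  have h1 : 2*x*(1-x)*(1-r) ≤ 2*q*(x*(1-x)) := by
    nlinarith [mul_nonneg (mul_nonneg hx0.le (by linarith : (0:ℝ) ≤ 1-x)) (by linarith : (0:ℝ) ≤ q - (1-r))]
  have h2 : x^2*(1-r)^2 ≤ q^2*x^2 := by
    have hq' : (1-r)^2 ≤ q^2 := by nlinarith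
    nlinarith [sq_nonneg x]
  have h3 : 2*q*(x*(1-x)) ≤ 2*q*((1-x)/(2-x)) := by nlinarith
  have h4 : 2*q*((1-x)/(2-x)) = 2*q*(1-x)/(2-x) := by ring
  linarith [e, h1, h2, h3]

lemma bSeq_ge {q L : ℝ} (hq0 : 0 < q) (hq2 : q ≤ 1/2) (hL0 : 0 ≤ L)
    (hL : L ≤ (1-q)/q) (k : ℕ) :
    L * (1 - Real.exp (-((k:ℝ)*q)))^2 - Real.log 2 ≤ bSeq q L k := by
  set r := Real.exp (-q) with hrdef
  have hr0 : 0 < r := Real.exp_pos _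
  have hrle : r ≤ 1 := by rw [hrdef, Real.exp_le_one_iff]; linarith
  have hrq : 1 - q ≤ r := one_sub_le_exp_neg q
  -- step A
  have stepA : 2*q*L * ∑ u ∈ Finset.range k, (1 - 1/(2 - r^u)) ≤ bSeq q L k := by
    rw [bSeq, Finset.mul_sum]
    apply Finset.sum_le_sum
    intro u _
    have h1 : Real.exp (-(aSeq q u)) ≤ 1/(2 - r^u) := aSeq_exp_le hq0 hq2 u
    have : 2*q*L*(1 - 1/(2-r^u)) ≤ 2*q*L*(1 - Real.exp (-(aSeq q u))) := by
      apply mul_le_mul_of_nonneg_left (by linarith) (by positivity)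
    linarith [this]
  -- step B (telescoping)
  have stepB : ∀ m : ℕ, (1 - r^m)^2 ≤
      (∑ u ∈ Finset.range m, 2*q*(1 - 1/(2 - r^u))) + q^2 * ∑ u ∈ Finset.range m, (r^2)^u := by
    intro m
    induction m with
    | zero => norm_num
    | succ m ih =>
      rw [Finset.sum_range_succ, Finset.sum_range_succ]
      have hx0 : 0 < r^m := pow_pos hr0 m
      have hx1 : r^m ≤ 1 := pow_le_one₀ (le_of_lt hr0) hrle
      have hpt : (1 - r*(r^m))^2 - (1-(r^m))^2 ≤ 2*q*(1-(r^m))/(2-(r^m)) + q^2*(r^m)^2 :=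
        per_term_ineq hq0 hq2 hrq hrle hx0 hx1
      have e1 : r^(m+1) = r * r^m := by rw [pow_succ]; ring
      have e2 : (r^2)^m = (r^m)^2 := by rw [← pow_mul, ← pow_mul, Nat.mul_comm]
      have e3 : 2*q*(1 - 1/(2 - r^m)) = 2*q*(1-(r^m))/(2-(r^m)) := by
        have hden : (2:ℝ) - r^m ≠ 0 := by linarith
        field_simp
        ring
      rw [e1, e2, e3]
      linarith
  -- step C : geometric sum
  have hrlt : r < 1 := by rw [hrdef, Real.exp_lt_one_iff]; linarith
  have hr2lt : r^2 < 1 := by nlinarith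
  have hr2pos : (0:ℝ) < 1 - r^2 := by linarith
  have stepC : ∑ u ∈ Finset.range k, (r^2)^u ≤ 1/(1 - r^2) := by
    have hmul := geom_sum_mul (r^2) k
    have hne : r^2 - 1 ≠ 0 := by linarith
    have hsum : ∑ u ∈ Finset.range k, (r^2)^u = (1 - (r^2)^k)/(1 - r^2) := by
      field_simp
      linarith [hmul]
    rw [hsum, div_le_div_iff₀ hr2pos hr2pos]
    nlinarith [pow_nonneg (sq_nonneg r) k]
  -- step D
  have stepD : q^2 * (1/(1 - r^2)) ≤ q*(1+2*q)/2 := by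
    have h1 : r^2 ≤ 1/(1+2*q) := by
      have : r^2 = Real.exp (-(2*q)) := by
        rw [hrdef, sq, ← Real.exp_add]; ring_nf
      rw [this]
      exact exp_neg_le_inv (by linarith)
    have h2 : 2*q/(1+2*q) ≤ 1 - r^2 := by
      have : 1 - 1/(1+2*q) = 2*q/(1+2*q) := by field_simp; ring
      linarith [this ▸ (by linarith : 1 - 1/(1+2*q) ≤ 1 - r^2)]
    have h3 : 0 < 2*q/(1+2*q) := by positivity
    have h4 : 1/(1-r^2) ≤ (1+2*q)/(2*q) := by
      rw [div_le_div_iff₀ hr2pos (by positivity)]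
      calc 1 * (2*q) = 2*q := by ring
        _ ≤ (1-r^2)*(1+2*q) := by
            rw [div_le_iff₀ (by positivity : (0:ℝ) < 1+2*q)] at h2
            linarith
        _ = (1+2*q)*(1-r^2) := by ring
    calc q^2 * (1/(1-r^2)) ≤ q^2 * ((1+2*q)/(2*q)) := by
          apply mul_le_mul_of_nonneg_left h4 (by positivity)
      _ = q*(1+2*q)/2 := by field_simp
  -- combine
  have hrk : Real.exp (-((k:ℝ)*q)) = r^k := by
    rw [hrdef, ← Real.exp_nat_mul]; ring_nf
  have hfin : L * (1 - r^k)^2 ≤ bSeq q L k + 9/16 := by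
    have h5 : L * (1 - r^k)^2 ≤ L * ((∑ u ∈ Finset.range k, 2*q*(1 - 1/(2 - r^u))) + q^2 * ∑ u ∈ Finset.range k, (r^2)^u) :=
      mul_le_mul_of_nonneg_left (stepB k) hL0
    have h6 : L * (∑ u ∈ Finset.range k, 2*q*(1 - 1/(2 - r^u))) = 2*q*L * ∑ u ∈ Finset.range k, (1 - 1/(2 - r^u)) := by
      rw [Finset.mul_sum, Finset.mul_sum]
      apply Finset.sum_congr rfl
      intro u _; ring
    have h7 : q^2 * ∑ u ∈ Finset.range k, (r^2)^u ≤ q*(1+2*q)/2 := by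
      calc q^2 * ∑ u ∈ Finset.range k, (r^2)^u ≤ q^2 * (1/(1-r^2)) := by
            apply mul_le_mul_of_nonneg_left stepC (by positivity)
        _ ≤ q*(1+2*q)/2 := stepD
    have h8 : L * (q*(1+2*q)/2) ≤ 9/16 := by
      have h9 : L * (q*(1+2*q)/2) ≤ ((1-q)/q) * (q*(1+2*q)/2) := by
        apply mul_le_mul_of_nonneg_right hL (by positivity)
      have h10 : ((1-q)/q) * (q*(1+2*q)/2) = (1-q)*(1+2*q)/2 := by
        field_simp
      have h11 : (1-q)*(1+2*q)/2 ≤ 9/16 := by nlinarith [sq_nonneg (q - 1/4)]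
      linarith
    have h12 : L * (q^2 * ∑ u ∈ Finset.range k, (r^2)^u) ≤ L * (q*(1+2*q)/2) :=
      mul_le_mul_of_nonneg_left h7 hL0
    calc L * (1-r^k)^2 ≤ L * (∑ u ∈ Finset.range k, 2*q*(1 - 1/(2 - r^u))) + L * (q^2 * ∑ u ∈ Finset.range k, (r^2)^u) := by
          rw [← mul_add]; exact h5
      _ ≤ bSeq q L k + 9/16 := by
          rw [h6]
          linarith [stepA, h12, h8]
  have hlog : (9:ℝ)/16 ≤ Real.log 2 := by
    have := Real.log_two_gt_d9
    norm_num at this ⊢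
    linarith
  rw [hrk]
  linarith

lemma fib_scalar {t : ℝ} (ht : 1/2 ≤ t) (ht1 : t ≤ 1) (m : ℕ) (hm : 1 ≤ m) :
    2*(1-t)*((m:ℝ)-1) ≤ (m:ℝ)*(1 - t^(m-1)) := by
  obtain ⟨j, rfl⟩ : ∃ j, m = j+1 := ⟨m-1, (Nat.succ_pred_eq_of_pos hm).symm⟩
  have hj : (j+1) - 1 = j := rfl
  rw [hj]
  have h1t : (0:ℝ) ≤ 1 - t := by linarith
  have ht0 : (0:ℝ) ≤ t := by linarith
  set S := ∑ i ∈ Finset.range j, t^i with hS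
  have hgeom : (1-t) * S = 1 - t^j := by
    have := geom_sum_mul t j
    rw [hS]; nlinarith [this]
  set P := (2:ℝ)^j with hP
  have hP0 : (0:ℝ) < P := by positivity
  have h3 : (j:ℝ)+1 ≤ P := by
    have := Nat.lt_two_pow_self (n := j)
    have : (j:ℕ)+1 ≤ 2^j := this
    calc ((j:ℝ)+1) = ((j+1 : ℕ) : ℝ) := by push_cast; ring
      _ ≤ ((2^j : ℕ) : ℝ) := by exact_mod_cast this
      _ = P := by push_cast; ring
  have hS2 : 2 - 2/P ≤ S := by
    have hhalf : ∑ i ∈ Finset.range j, ((1:ℝ)/2)^i ≤ S := by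
      apply Finset.sum_le_sum
      intro i _
      exact pow_le_pow_left₀ (by norm_num) ht i
    have hhalfeq : ∑ i ∈ Finset.range j, ((1:ℝ)/2)^i = 2 - 2/P := by
      have := geom_sum_mul ((1:ℝ)/2) j
      have hpow : ((1:ℝ)/2)^j = 1/P := by
        rw [hP, div_pow, one_pow]
      rw [hpow] at this
      linear_combination (-2:ℝ) * this
    linarith
  have key : 2*(j:ℝ) ≤ ((j:ℝ)+1) * S := by
    have h5 : ((j:ℝ)+1) * (2 - 2/P) ≥ 2*(j:ℝ) := by
      have h6 : ((j:ℝ)+1)/P ≤ 1 := by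
        rw [div_le_one hP0]; exact h3
      have h7 : ((j:ℝ)+1) * (2 - 2/P) = 2*((j:ℝ)+1) - 2*(((j:ℝ)+1)/P) := by
        field_simp
      rw [h7]; linarith
    have h8 : ((j:ℝ)+1) * (2 - 2/P) ≤ ((j:ℝ)+1) * S :=
      mul_le_mul_of_nonneg_left hS2 (by positivity)
    linarith
  calc 2*(1-t)*((((j+1):ℕ):ℝ)-1) = (1-t) * (2*(j:ℝ)) := by push_cast; ring
    _ ≤ (1-t) * (((j:ℝ)+1) * S) := mul_le_mul_of_nonneg_left key h1t
    _ = ((j:ℝ)+1) * ((1-t)*S) := by ring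
    _ = ((((j+1):ℕ)):ℝ) * (1 - t^j) := by rw [hgeom]; push_cast; ring

lemma fib_sum {A B : Type*} [Fintype A] [DecidableEq A] [DecidableEq B]
    (f : A → B) (RU : Finset A)
    (hfib : ∀ y ∈ RU, ∀ z, f z = f y → z ∈ RU) {t : ℝ} (ht : 1/2 ≤ t) (ht1 : t ≤ 1) :
    2*(1-t)*((RU.card:ℝ) - ((RU.image f).card:ℝ)) ≤
      ∑ y ∈ RU, (1 - t ^ ((Finset.univ.filter (fun z => f z = f y)).card - 1)) := by
  have hmaps : ∀ y ∈ RU, f y ∈ RU.image f := fun y hy => Finset.mem_image_of_mem f hy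
  rw [← Finset.sum_fiberwise_of_maps_to hmaps]
  have hcard : (RU.card:ℝ) = ∑ b ∈ RU.image f, ((RU.filter (fun y => f y = b)).card : ℝ) := by
    rw [Finset.card_eq_sum_card_fiberwise hmaps]
    push_cast; ring
  have himg : ((RU.image f).card:ℝ) = ∑ b ∈ RU.image f, (1:ℝ) := by simp
  rw [hcard, himg, ← Finset.sum_sub_distrib, Finset.mul_sum]
  apply Finset.sum_le_sum
  intro b hb
  obtain ⟨y0, hy0, hfy0⟩ := Finset.mem_image.mp hb
  set m := (RU.filter (fun y => f y = b)).card with hm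
  have hm1 : 1 ≤ m := Finset.card_pos.mpr ⟨y0, Finset.mem_filter.mpr ⟨hy0, hfy0⟩⟩
  have hfibeq : ∀ y ∈ RU.filter (fun y => f y = b),
      (Finset.univ.filter (fun z => f z = f y)).card = m := by
    intro y hy
    obtain ⟨hyRU, hfyb⟩ := Finset.mem_filter.mp hy
    have : Finset.univ.filter (fun z => f z = f y) = RU.filter (fun y' => f y' = b) := by
      ext z
      simp only [Finset.mem_filter, Finset.mem_univ, true_and]
      constructor
      · intro hz
        exact ⟨hfib y hyRU z hz, by rw [hz, hfyb]⟩
      · intro ⟨_, hz⟩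
        rw [hz, hfyb]
    rw [this]
  have hinner : ∑ y ∈ RU.filter (fun y => f y = b),
      (1 - t ^ ((Finset.univ.filter (fun z => f z = f y)).card - 1)) = (m:ℝ)*(1 - t^(m-1)) := by
    rw [Finset.sum_congr rfl (fun y hy => by rw [hfibeq y hy])]
    rw [Finset.sum_const, ← hm, nsmul_eq_mul]
  rw [hinner]
  exact fib_scalar ht ht1 m hm1

section Qsum
variable {A B : Type*} [Fintype A] [DecidableEq A] [DecidableEq B]

noncomputable def Qsum (f : A → B) (Pdist : A → ℝ) (U : Finset A) (u : ℕ) : ℝ :=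
  ∑ y ∈ Finset.univ.filter (fun y : Fin u → A =>
      (∀ i j, i ≠ j → f (y i) ≠ f (y j)) ∧ ∀ i, f (y i) ∉ U.image f),
    ∏ t, Pdist (y t) / (1 - (∑ a ∈ U, Pdist a) -
      ∑ j ∈ Finset.univ.filter (fun j => j < t), Pdist (y j))

lemma cons_pred (f : A → B) (U : Finset A) (u : ℕ) (a : A) (z : Fin u → A) :
    ((∀ i j, i ≠ j → f ((Fin.cons a z : Fin (u+1) → A) i) ≠ f ((Fin.cons a z : Fin (u+1) → A) j)) ∧
      ∀ i, f ((Fin.cons a z : Fin (u+1) → A) i) ∉ U.image f) ↔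
    (f a ∉ U.image f) ∧ ((∀ i j, i ≠ j → f (z i) ≠ f (z j)) ∧
      ∀ i, f (z i) ∉ (insert a U).image f) := by
  constructor
  · rintro ⟨h1, h2⟩
    refine ⟨by simpa using h2 0, ?_, ?_⟩
    · intro i j hij
      have hne : i.succ ≠ j.succ := fun h => hij (Fin.succ_injective _ h)
      have := h1 i.succ j.succ hne
      simpa using this
    · intro i
      rw [Finset.image_insert, Finset.mem_insert]
      push_neg
      constructor
      · have := h1 i.succ 0 (Fin.succ_ne_zero i)
        simpa using this
      · simpa using h2 i.succ
  · rintro ⟨ha, hz1, hz2⟩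
    have hz2' : ∀ i, f (z i) ≠ f a ∧ f (z i) ∉ U.image f := by
      intro i
      have := hz2 i
      rw [Finset.image_insert, Finset.mem_insert] at this
      push_neg at this
      exact this
    constructor
    · intro i j hij
      rcases Fin.eq_zero_or_eq_succ i with rfl | ⟨i', rfl⟩ <;>
        rcases Fin.eq_zero_or_eq_succ j with rfl | ⟨j', rfl⟩
      · exact absurd rfl hij
      · simpa using (hz2' j').1.symm
      · simpa using (hz2' i').1
      · have hne : i' ≠ j' := fun h => hij (by rw [h])
        simpa using hz1 i' j' hne
    · intro i
      rcases Fin.eq_zero_or_eq_succ i with rfl | ⟨i', rfl⟩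
      · simpa using ha
      · simpa using (hz2' i').2

lemma factor_eq (f : A → B) (Pdist : A → ℝ) (U : Finset A) (u : ℕ) (a : A)
    (haU : a ∉ U) (z : Fin u → A) :
    (∏ t : Fin (u+1), Pdist ((Fin.cons a z : Fin (u+1) → A) t) / (1 - (∑ x ∈ U, Pdist x) -
        ∑ j ∈ Finset.univ.filter (fun j => j < t), Pdist ((Fin.cons a z : Fin (u+1) → A) j))) =
    (Pdist a / (1 - ∑ x ∈ U, Pdist x)) *
      ∏ t : Fin u, Pdist (z t) / (1 - (∑ x ∈ insert a U, Pdist x) -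
        ∑ j ∈ Finset.univ.filter (fun j => j < t), Pdist (z j)) := by
  rw [Fin.prod_univ_succ]
  congr 1
  · have hfilt : (Finset.univ.filter (fun j : Fin (u+1) => j < 0)) = ∅ := by
      apply Finset.filter_false_of_mem
      intro j _
      exact Fin.not_lt_zero j
    rw [hfilt]
    simp
  · apply Finset.prod_congr rfl
    intro t _
    have hnum : Pdist ((Fin.cons a z : Fin (u+1) → A) t.succ) = Pdist (z t) := by rw [Fin.cons_succ]
    have hden : ∑ j ∈ Finset.univ.filter (fun j : Fin (u+1) => j < t.succ),
        Pdist ((Fin.cons a z : Fin (u+1) → A) j) =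
        Pdist a + ∑ j ∈ Finset.univ.filter (fun j : Fin u => j < t), Pdist (z j) := by
      rw [Finset.sum_filter, Fin.sum_univ_succ, Finset.sum_filter]
      simp [Fin.succ_lt_succ_iff, Fin.succ_pos]
    have hins : ∑ x ∈ insert a U, Pdist x = Pdist a + ∑ x ∈ U, Pdist x :=
      Finset.sum_insert haU
    rw [hnum, hden, hins]
    ring_nf

lemma Qsum_succ (f : A → B) (Pdist : A → ℝ) (U : Finset A) (u : ℕ) :
    Qsum f Pdist U (u+1) = ∑ a ∈ Finset.univ.filter (fun a => f a ∉ U.image f),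
      (Pdist a / (1 - ∑ x ∈ U, Pdist x)) * Qsum f Pdist (insert a U) u := by
  rw [Qsum, Finset.sum_filter, Finset.sum_filter]
  rw [← Equiv.sum_comp (Fin.consEquiv (fun _ : Fin (u+1) => A)), Fintype.sum_prod_type]
  apply Finset.sum_congr rfl
  intro a _
  by_cases hQ : f a ∉ U.image f
  · rw [if_pos hQ]
    have haU : a ∉ U := fun h => hQ (Finset.mem_image_of_mem f h)
    have step : ∀ z : Fin u → A,
        (if ((∀ i j, i ≠ j → f ((Fin.consEquiv (fun _ : Fin (u+1) => A)) (a, z) i) ≠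
              f ((Fin.consEquiv (fun _ : Fin (u+1) => A)) (a, z) j)) ∧
            ∀ i, f ((Fin.consEquiv (fun _ : Fin (u+1) => A)) (a, z) i) ∉ U.image f) then
          (∏ t, Pdist ((Fin.consEquiv (fun _ : Fin (u+1) => A)) (a, z) t) /
            (1 - (∑ x ∈ U, Pdist x) -
              ∑ j ∈ Finset.univ.filter (fun j => j < t),
                Pdist ((Fin.consEquiv (fun _ : Fin (u+1) => A)) (a, z) j))) else 0) =
        (Pdist a / (1 - ∑ x ∈ U, Pdist x)) *
          (if ((∀ i j, i ≠ j → f (z i) ≠ f (z j)) ∧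
              ∀ i, f (z i) ∉ (insert a U).image f) then
            (∏ t, Pdist (z t) / (1 - (∑ x ∈ insert a U, Pdist x) -
              ∑ j ∈ Finset.univ.filter (fun j => j < t), Pdist (z j))) else 0) := by
      intro z
      have hc : (Fin.consEquiv (fun _ : Fin (u+1) => A)) (a, z) = (Fin.cons a z : Fin (u+1) → A) := rfl
      rw [hc]
      by_cases hP : ((∀ i j, i ≠ j → f (z i) ≠ f (z j)) ∧
          ∀ i, f (z i) ∉ (insert a U).image f)
      · rw [if_pos ((cons_pred f U u a z).mpr ⟨hQ, hP⟩), if_pos hP]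
        exact factor_eq f Pdist U u a haU z
      · rw [if_neg (fun h => hP ((cons_pred f U u a z).mp h).2), if_neg hP, mul_zero]
    calc (∑ z : Fin u → A, _) = ∑ z : Fin u → A,
          ((Pdist a / (1 - ∑ x ∈ U, Pdist x)) *
          (if ((∀ i j, i ≠ j → f (z i) ≠ f (z j)) ∧
              ∀ i, f (z i) ∉ (insert a U).image f) then
            (∏ t, Pdist (z t) / (1 - (∑ x ∈ insert a U, Pdist x) -
              ∑ j ∈ Finset.univ.filter (fun j => j < t), Pdist (z j))) else 0)) :=
        Finset.sum_congr rfl (fun z _ => step z)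
      _ = (Pdist a / (1 - ∑ x ∈ U, Pdist x)) * Qsum f Pdist (insert a U) u := by
          rw [← Finset.mul_sum, Qsum, Finset.sum_filter]
  · rw [if_neg hQ]
    apply Finset.sum_eq_zero
    intro z _
    have hc : (Fin.consEquiv (fun _ : Fin (u+1) => A)) (a, z) = (Fin.cons a z : Fin (u+1) → A) := rfl
    rw [hc, if_neg (fun h => hQ ((cons_pred f U u a z).mp h).1)]

end Qsum

section Main
variable {A B : Type*} [Fintype A] [DecidableEq A] [Fintype B] [DecidableEq B]

lemma Qsum_zero (f : A → B) (Pdist : A → ℝ) (U : Finset A) :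
    Qsum f Pdist U 0 = 1 := by
  rw [Qsum]
  have htriv : ∀ y : Fin 0 → A, ((∀ i j, i ≠ j → f (y i) ≠ f (y j)) ∧
      ∀ i, f (y i) ∉ U.image f) := fun y => ⟨fun i => i.elim0, fun i => i.elim0⟩
  rw [Finset.filter_true_of_mem (fun y _ => htriv y)]
  simp

lemma sum_split (f : A → B) (Pdist : A → ℝ) (U : Finset A) :
    (∑ x ∈ U, Pdist x) +
      (∑ x ∈ Finset.univ.filter (fun z => z ∉ U ∧ f z ∈ U.image f), Pdist x) +
      (∑ x ∈ Finset.univ.filter (fun z => f z ∉ U.image f), Pdist x) = ∑ x, Pdist x := by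
  have h1 := Finset.sum_filter_add_sum_filter_not Finset.univ
    (fun z => f z ∈ U.image f) Pdist
  have h2 := Finset.sum_filter_add_sum_filter_not
    (Finset.univ.filter (fun z => f z ∈ U.image f)) (fun z => z ∈ U) Pdist
  have e1 : (Finset.univ.filter (fun z => f z ∈ U.image f)).filter (fun z => z ∈ U) = U := by
    ext z
    simp only [Finset.mem_filter, Finset.mem_univ, true_and]
    exact ⟨fun h => h.2, fun h => ⟨Finset.mem_image_of_mem f h, h⟩⟩
  have e2 : (Finset.univ.filter (fun z => f z ∈ U.image f)).filter (fun z => ¬ z ∈ U) =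
      Finset.univ.filter (fun z => z ∉ U ∧ f z ∈ U.image f) := by
    ext z
    simp only [Finset.mem_filter, Finset.mem_univ, true_and]
    tauto
  rw [e1, e2] at h2
  linarith [h1, h2]

lemma card_split (f : A → B) (U : Finset A) :
    U.card + (Finset.univ.filter (fun z => z ∉ U ∧ f z ∈ U.image f)).card +
      (Finset.univ.filter (fun z => f z ∉ U.image f)).card = Fintype.card A := by
  have h := sum_split f (fun _ : A => (1:ℝ)) U
  simp only [Finset.sum_const, nsmul_eq_mul, mul_one] at h
  have h2 : U.card + (Finset.univ.filter (fun z => z ∉ U ∧ f z ∈ U.image f)).card +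
      (Finset.univ.filter (fun z => f z ∉ U.image f)).card = (Finset.univ : Finset A).card := by
    exact_mod_cast h
  simpa [Finset.card_univ] using h2

lemma W_insert (f : A → B) (U : Finset A) (a : A) (ha : f a ∉ U.image f) :
    (Finset.univ.filter (fun z => z ∉ insert a U ∧ f z ∈ (insert a U).image f)).card
      = (Finset.univ.filter (fun z => z ∉ U ∧ f z ∈ U.image f)).card
        + ((Finset.univ.filter (fun z => f z = f a)).card - 1) := by
  set Fib := Finset.univ.filter (fun z => f z = f a) with hFib
  have haFib : a ∈ Fib := Finset.mem_filter.mpr ⟨Finset.mem_univ a, rfl⟩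
  have hset : Finset.univ.filter (fun z => z ∉ insert a U ∧ f z ∈ (insert a U).image f)
      = (Finset.univ.filter (fun z => z ∉ U ∧ f z ∈ U.image f)) ∪ (Fib.erase a) := by
    ext z
    simp only [Finset.mem_filter, Finset.mem_univ, true_and, Finset.mem_union,
      Finset.mem_erase, Finset.mem_insert, Finset.image_insert, hFib]
    constructor
    · rintro ⟨hz1, hz2⟩
      push_neg at hz1
      rcases hz2 with hz2 | hz2
      · exact Or.inr ⟨hz1.1, hz2⟩
      · exact Or.inl ⟨hz1.2, hz2⟩
    · rintro (⟨hz1, hz2⟩ | ⟨hz1, hz2⟩)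
      · refine ⟨?_, Or.inr hz2⟩
        push_neg
        refine ⟨fun h => ?_, hz1⟩
        rw [← h] at ha
        exact ha hz2
      · refine ⟨?_, Or.inl hz2⟩
        push_neg
        refine ⟨hz1, fun h => ?_⟩
        rw [← hz2] at ha
        exact ha (Finset.mem_image_of_mem f h)
  have hdisj : Disjoint (Finset.univ.filter (fun z => z ∉ U ∧ f z ∈ U.image f)) (Fib.erase a) := by
    rw [Finset.disjoint_left]
    intro z hz1 hz2
    have h1 := (Finset.mem_filter.mp hz1).2.2
    have h2 := (Finset.mem_filter.mp (Finset.mem_of_mem_erase hz2)).2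
    rw [h2] at h1
    exact ha h1
  rw [hset, Finset.card_union_of_disjoint hdisj, Finset.card_erase_of_mem haFib]

end Main

section Inductions
variable {A B : Type*} [Fintype A] [DecidableEq A] [Fintype B] [DecidableEq B]

lemma denom_pos (Pdist : A → ℝ) {n : ℕ} (hn : Fintype.card A = n) {q : ℝ}
    (hq0 : 0 < q) (hP1 : ∑ x, Pdist x = 1) (hPlb : ∀ x, q ≤ Pdist x)
    (U : Finset A) (hU : U.card < n) : 0 < 1 - ∑ x ∈ U, Pdist x := by
  have hsd := Finset.sum_sdiff (Finset.subset_univ U) (f := Pdist)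
  rw [hP1] at hsd
  have hcard : (Finset.univ \ U).card = n - U.card := by
    rw [Finset.card_sdiff_of_subset (Finset.subset_univ U), Finset.card_univ, hn]
  have hne : 0 < (Finset.univ \ U).card := by omega
  have hsum : q ≤ ∑ x ∈ Finset.univ \ U, Pdist x := by
    calc q = 1 * q := (one_mul q).symm
      _ ≤ ((Finset.univ \ U).card : ℝ) * q := by
          apply mul_le_mul_of_nonneg_right _ (le_of_lt hq0)
          exact_mod_cast hne
      _ ≤ ∑ x ∈ Finset.univ \ U, Pdist x := by
          rw [← nsmul_eq_mul]
          exact Finset.card_nsmul_le_sum _ _ _ (fun x _ => hPlb x)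
  linarith

lemma Qsum_le_one (f : A → B) (Pdist : A → ℝ) {n : ℕ} (hn : Fintype.card A = n)
    {q : ℝ} (hq0 : 0 < q) (hP1 : ∑ x, Pdist x = 1) (hPlb : ∀ x, q ≤ Pdist x) :
    ∀ (u : ℕ) (U : Finset A), U.card + u ≤ n → Qsum f Pdist U u ≤ 1 := by
  intro u
  induction u with
  | zero => intro U _; rw [Qsum_zero]
  | succ u ih =>
    intro U hcard
    have hU : U.card < n := by omega
    have hDm := denom_pos Pdist hn hq0 hP1 hPlb U hU
    rw [Qsum_succ]
    set RU := Finset.univ.filter (fun z => f z ∉ U.image f) with hRU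
    have hterm : ∀ a ∈ RU, (Pdist a / (1 - ∑ x ∈ U, Pdist x)) * Qsum f Pdist (insert a U) u
        ≤ Pdist a / (1 - ∑ x ∈ U, Pdist x) := by
      intro a ha
      have haU : a ∉ U := by
        intro h
        exact (Finset.mem_filter.mp ha).2 (Finset.mem_image_of_mem f h)
      have hc : (insert a U).card + u ≤ n := by
        rw [Finset.card_insert_of_notMem haU]; omega
      have := ih (insert a U) hc
      have hnn : 0 ≤ Pdist a / (1 - ∑ x ∈ U, Pdist x) := by
        apply div_nonneg _ (le_of_lt hDm)
        linarith [hPlb a]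
      nlinarith
    calc (∑ a ∈ RU, (Pdist a / (1 - ∑ x ∈ U, Pdist x)) * Qsum f Pdist (insert a U) u)
        ≤ ∑ a ∈ RU, Pdist a / (1 - ∑ x ∈ U, Pdist x) := Finset.sum_le_sum hterm
      _ = (∑ a ∈ RU, Pdist a) / (1 - ∑ x ∈ U, Pdist x) := by rw [Finset.sum_div]
      _ ≤ 1 := by
          rw [div_le_one hDm]
          have := sum_split f Pdist U
          rw [hP1] at this
          have hC : 0 ≤ ∑ x ∈ Finset.univ.filter (fun z => z ∉ U ∧ f z ∈ U.image f), Pdist x :=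
            Finset.sum_nonneg (fun x _ => le_trans (le_of_lt hq0) (hPlb x))
          have hU0 : 0 ≤ ∑ x ∈ U, Pdist x :=
            Finset.sum_nonneg (fun x _ => le_trans (le_of_lt hq0) (hPlb x))
          rw [← hRU] at this
          linarith

lemma main_bound (f : A → B) (Pdist : A → ℝ) (n ℓ : ℕ) (q : ℝ)
    (hq0 : 0 < q) (hq2 : q ≤ 1/2)
    (hn : Fintype.card A = n) (hℓn : ℓ ≤ n) (hB : Fintype.card B = n - ℓ)
    (hP1 : ∑ x, Pdist x = 1) (hPlb : ∀ x, q ≤ Pdist x) :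
    ∀ (u : ℕ) (U : Finset A), Set.InjOn f ↑U → U.card + u ≤ n →
      Qsum f Pdist U u ≤ Real.exp (-(aSeq q u) *
        ((Finset.univ.filter (fun z => z ∉ U ∧ f z ∈ U.image f)).card : ℝ) - bSeq q (ℓ:ℝ) u) := by
  intro u
  induction u with
  | zero =>
    intro U _ _
    rw [Qsum_zero]
    simp [aSeq, bSeq]
  | succ u ih =>
    intro U hinj hcard
    have hU : U.card < n := by omega
    have hDm := denom_pos Pdist hn hq0 hP1 hPlb U hU
    have hDm1 : 1 - ∑ x ∈ U, Pdist x ≤ 1 := by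
      have : 0 ≤ ∑ x ∈ U, Pdist x :=
        Finset.sum_nonneg (fun x _ => le_trans (le_of_lt hq0) (hPlb x))
      linarith
    obtain ⟨ht1, ht2⟩ := aSeq_exp_bounds hq0 hq2 u
    set t := Real.exp (-(aSeq q u)) with htdef
    set Dm := 1 - ∑ x ∈ U, Pdist x with hDmdef
    set W := (Finset.univ.filter (fun z => z ∉ U ∧ f z ∈ U.image f)).card with hWdef
    set RU := Finset.univ.filter (fun z => f z ∉ U.image f) with hRUdef
    set wex : A → ℕ := fun a => (Finset.univ.filter (fun z => f z = f a)).card - 1 with hwdef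
    -- step 1: termwise bound via ih
    have hterm : ∀ a ∈ RU, (Pdist a / Dm) * Qsum f Pdist (insert a U) u
        ≤ (Real.exp (-(aSeq q u) * (W:ℝ) - bSeq q (ℓ:ℝ) u) / Dm) * (Pdist a * t ^ (wex a)) := by
      intro a ha
      have hfa : f a ∉ U.image f := (Finset.mem_filter.mp ha).2
      have haU : a ∉ U := fun h => hfa (Finset.mem_image_of_mem f h)
      have hc : (insert a U).card + u ≤ n := by
        rw [Finset.card_insert_of_notMem haU]; omega
      have hinj' : Set.InjOn f ↑(insert a U) := by
        rw [Finset.coe_insert]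
        intro x hx y hy hxy
        rcases Set.mem_insert_iff.mp hx with rfl | hx' <;>
          rcases Set.mem_insert_iff.mp hy with rfl | hy'
        · rfl
        · exfalso
          apply hfa
          have hmem : f y ∈ U.image f := Finset.mem_image_of_mem f (Finset.mem_coe.mp hy')
          rwa [← hxy] at hmem
        · exfalso
          apply hfa
          have hmem : f x ∈ U.image f := Finset.mem_image_of_mem f (Finset.mem_coe.mp hx')
          rwa [hxy] at hmem
        · exact hinj hx' hy' hxy
      have hih := ih (insert a U) hinj' hc
      have hWins := W_insert f U a hfa
      have hcast : ((Finset.univ.filter (fun z => z ∉ insert a U ∧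
          f z ∈ (insert a U).image f)).card : ℝ) = (W:ℝ) + (wex a : ℝ) := by
        rw [hWins]; push_cast; ring
      have hexp : Real.exp (-(aSeq q u) * ((W:ℝ) + (wex a : ℝ)) - bSeq q (ℓ:ℝ) u)
          = Real.exp (-(aSeq q u) * (W:ℝ) - bSeq q (ℓ:ℝ) u) * t ^ (wex a) := by
        rw [htdef, ← Real.exp_nat_mul, ← Real.exp_add]
        congr 1
        ring
      rw [hcast, hexp] at hih
      have hnn : 0 ≤ Pdist a / Dm := by
        apply div_nonneg _ (le_of_lt hDm)
        linarith [hPlb a]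
      calc (Pdist a / Dm) * Qsum f Pdist (insert a U) u
          ≤ (Pdist a / Dm) * (Real.exp (-(aSeq q u) * (W:ℝ) - bSeq q (ℓ:ℝ) u) * t ^ (wex a)) :=
            mul_le_mul_of_nonneg_left hih hnn
        _ = (Real.exp (-(aSeq q u) * (W:ℝ) - bSeq q (ℓ:ℝ) u) / Dm) * (Pdist a * t ^ (wex a)) := by
            ring
    -- step 2: sum the bound
    have hsumbd : Qsum f Pdist U (u+1) ≤ (Real.exp (-(aSeq q u) * (W:ℝ) - bSeq q (ℓ:ℝ) u) / Dm) *
        (∑ a ∈ RU, Pdist a * t ^ (wex a)) := by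
      rw [Qsum_succ, ← hRUdef, ← hDmdef, Finset.mul_sum]
      exact Finset.sum_le_sum hterm
    have hp0 : ∀ x, 0 ≤ Pdist x := fun x => le_trans (le_of_lt hq0) (hPlb x)
    set E := Real.exp (-(aSeq q u) * (W:ℝ) - bSeq q (ℓ:ℝ) u) with hEdef
    set CU := Finset.univ.filter (fun z => z ∉ U ∧ f z ∈ U.image f) with hCUdef
    set Ssum2 := ∑ a ∈ RU, Pdist a * t ^ (wex a) with hSsum2def
    set Ssumx := ∑ a ∈ RU, Pdist a * (1 - t ^ (wex a)) with hSsumxdef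
    set SsumC := ∑ x ∈ CU, Pdist x with hSsumCdef
    have ht0 : (0:ℝ) < t := Real.exp_pos _
    have hpw1 : ∀ a : A, t ^ (wex a) ≤ 1 := fun a => pow_le_one₀ (le_of_lt ht0) ht2
    have hpw0 : ∀ a : A, 0 ≤ t ^ (wex a) := fun a => le_of_lt (pow_pos ht0 _)
    have hSsumC0 : 0 ≤ SsumC := Finset.sum_nonneg (fun x _ => hp0 x)
    have hSsumx0 : 0 ≤ Ssumx := Finset.sum_nonneg (fun a _ =>
      mul_nonneg (hp0 a) (by linarith [hpw1 a]))
    -- partition identity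
    have hsplit := sum_split f Pdist U
    rw [hP1, ← hCUdef, ← hRUdef, ← hSsumCdef] at hsplit
    have hSsum2eq : Ssum2 = Dm - (SsumC + Ssumx) := by
      have h1 : Ssum2 + Ssumx = ∑ a ∈ RU, Pdist a := by
        rw [hSsum2def, hSsumxdef, ← Finset.sum_add_distrib]
        apply Finset.sum_congr rfl
        intro a _; ring
      rw [hDmdef]; linarith
    -- lower bound on SsumC
    have hCW : q * (W:ℝ) ≤ SsumC := by
      have := Finset.card_nsmul_le_sum CU Pdist q (fun x _ => hPlb x)
      rw [nsmul_eq_mul] at this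
      rw [hWdef, hCUdef]
      calc q * ((CU.card:ℝ)) = (CU.card:ℝ) * q := by ring
        _ ≤ SsumC := this
    -- lower bound on Ssumx
    have hfibclosed : ∀ y ∈ RU, ∀ z, f z = f y → z ∈ RU := by
      intro y hy z hz
      rw [hRUdef, Finset.mem_filter] at hy ⊢
      exact ⟨Finset.mem_univ z, by rw [hz]; exact hy.2⟩
    have hfibsum : 2*(1-t)*((RU.card:ℝ) - ((RU.image f).card:ℝ)) ≤
        ∑ y ∈ RU, (1 - t ^ (wex y)) := fib_sum f RU hfibclosed ht1 ht2
    have hcnt : (ℓ:ℝ) - (W:ℝ) ≤ (RU.card:ℝ) - ((RU.image f).card:ℝ) := by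
      have hcs := card_split f U
      rw [hn, ← hCUdef, ← hRUdef, ← hWdef] at hcs
      have himgU : (U.image f).card = U.card := Finset.card_image_of_injOn hinj
      have hdisj : Disjoint (U.image f) (RU.image f) := by
        rw [Finset.disjoint_left]
        intro b hb1 hb2
        obtain ⟨y, hy, rfl⟩ := Finset.mem_image.mp hb2
        rw [hRUdef, Finset.mem_filter] at hy
        exact hy.2 hb1
      have hle : (U.image f).card + (RU.image f).card ≤ n - ℓ := by
        rw [← Finset.card_union_of_disjoint hdisj, ← hB]
        exact Finset.card_le_univ _
      have hle' : ((U.image f).card : ℝ) + ((RU.image f).card : ℝ) ≤ (n:ℝ) - (ℓ:ℝ) := by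
        have : ((n - ℓ : ℕ) : ℝ) = (n:ℝ) - (ℓ:ℝ) := by
          rw [Nat.cast_sub hℓn]
        rw [← this]
        exact_mod_cast hle
      have hcs' : (U.card:ℝ) + (W:ℝ) + (RU.card:ℝ) = (n:ℝ) := by exact_mod_cast hcs
      rw [himgU] at hle'
      push_cast at hle' hcs' ⊢
      linarith
    have hSlb : 2*q*(1-t)*((ℓ:ℝ) - (W:ℝ)) ≤ Ssumx := by
      have h1 : q * ∑ y ∈ RU, (1 - t ^ (wex y)) ≤ Ssumx := by
        rw [hSsumxdef, Finset.mul_sum]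
        apply Finset.sum_le_sum
        intro a _
        exact mul_le_mul_of_nonneg_right (hPlb a) (by linarith [hpw1 a])
      have h2 : 2*(1-t)*((ℓ:ℝ) - (W:ℝ)) ≤ 2*(1-t)*((RU.card:ℝ) - ((RU.image f).card:ℝ)) :=
        mul_le_mul_of_nonneg_left hcnt (by linarith)
      have h3 : q * (2*(1-t)*((ℓ:ℝ) - (W:ℝ))) ≤ q * ∑ y ∈ RU, (1 - t ^ (wex y)) := by
        apply mul_le_mul_of_nonneg_left _ (le_of_lt hq0)
        linarith
      calc 2*q*(1-t)*((ℓ:ℝ) - (W:ℝ)) = q * (2*(1-t)*((ℓ:ℝ) - (W:ℝ))) := by ring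
        _ ≤ Ssumx := le_trans h3 h1
    -- fraction bound
    set z := SsumC + Ssumx with hzdef
    have hz0 : 0 ≤ z := by linarith
    have hfrac : Ssum2 / Dm ≤ Real.exp (-z) := by
      have h1 : Ssum2 / Dm = 1 - z / Dm := by
        rw [hSsum2eq, sub_div, div_self (ne_of_gt hDm)]
      have h2 : z ≤ z / Dm := by
        rw [le_div_iff₀ hDm]
        nlinarith
      have h3 : (1:ℝ) - z ≤ Real.exp (-z) := one_sub_le_exp_neg z
      linarith
    have hzlb : q*(W:ℝ) + 2*q*(1-t)*((ℓ:ℝ) - (W:ℝ)) ≤ z := by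
      rw [hzdef]; linarith
    calc Qsum f Pdist U (u+1) ≤ (E / Dm) * Ssum2 := hsumbd
      _ = E * (Ssum2 / Dm) := by ring
      _ ≤ E * Real.exp (-z) := mul_le_mul_of_nonneg_left hfrac (Real.exp_nonneg _)
      _ ≤ E * Real.exp (-(q*(W:ℝ) + 2*q*(1-t)*((ℓ:ℝ) - (W:ℝ)))) := by
          apply mul_le_mul_of_nonneg_left _ (Real.exp_nonneg _)
          exact Real.exp_le_exp.mpr (by linarith)
      _ = Real.exp (-(aSeq q (u+1)) * (W:ℝ) - bSeq q (ℓ:ℝ) (u+1)) := by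
          rw [hEdef, ← Real.exp_add]
          congr 1
          have ha : aSeq q (u+1) = aSeq q u + q*(2*t - 1) := by
            rw [show aSeq q (u+1) = aSeq q u + q * (2 * Real.exp (-(aSeq q u)) - 1) from rfl,
              ← htdef]
          have hb : bSeq q (ℓ:ℝ) (u+1) = bSeq q (ℓ:ℝ) u + 2*q*(1-t)*(ℓ:ℝ) := by
            rw [bSeq, bSeq, Finset.sum_range_succ, ← htdef]
          rw [ha, hb]
          ring

end Inductions

/-- **Duplicate-detection bound under sequential weighted sampling without
replacement.**
Let `A` be a finite set of size `n ≥ 1`, `f : A → B` a map into a finite set of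
size `n − ℓ`, `c ≥ 0`, and `Pdist` a probability distribution on `A` with
`1/(n(1+c)) ≤ Pdist(x) ≤ (1+c)/n`, and let `1 ≤ k ≤ n`.  Under sequential
weighted sampling without replacement, the mass of an injective tuple
`x : Fin k → A` is `P_seq(x) = ∏ t, Pdist(x t) / (1 − ∑_{j<t} Pdist(x j))`.
The probability of the event `E_k^seq = {∀ i ≠ j, f(X_i) ≠ f(X_j)}` — the sum
of `P_seq` over all tuples whose `f`-values are pairwise distinct (all such
tuples are injective) — is at most
`2·exp(−ℓ(1 − exp(−k/(n(1+c))))²) ≤ 2·exp(−k²ℓ/(4n²(1+c)²))`. -/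
theorem duplicate_detection_sequential
    {A B : Type*} [Fintype A] [DecidableEq A] [Fintype B] [DecidableEq B]
    (f : A → B)
    (n ℓ : ℕ) (hn : Fintype.card A = n) (hn1 : 1 ≤ n)
    (hℓn : ℓ ≤ n) (hB : Fintype.card B = n - ℓ)
    (c : ℝ) (hc : 0 ≤ c)
    (Pdist : A → ℝ) (hP0 : ∀ x, 0 ≤ Pdist x) (hP1 : ∑ x, Pdist x = 1)
    (hPlb : ∀ x, 1 / ((n : ℝ) * (1 + c)) ≤ Pdist x)
    (hPub : ∀ x, Pdist x ≤ (1 + c) / (n : ℝ))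
    (k : ℕ) (hk1 : 1 ≤ k) (hkn : k ≤ n)
    (Pseq : (Fin k → A) → ℝ)
    (hPseq : ∀ x : Fin k → A, Pseq x =
      ∏ t, Pdist (x t) /
        (1 - ∑ j ∈ (Finset.univ.filter fun j : Fin k => j < t), Pdist (x j))) :
    (∑ x ∈ (Finset.univ.filter fun x : Fin k → A =>
        ∀ i j : Fin k, i ≠ j → f (x i) ≠ f (x j)), Pseq x) ≤
      2 * Real.exp (-(ℓ : ℝ) *
        (1 - Real.exp (-(k : ℝ) / ((n : ℝ) * (1 + c)))) ^ 2) ∧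
    2 * Real.exp (-(ℓ : ℝ) *
        (1 - Real.exp (-(k : ℝ) / ((n : ℝ) * (1 + c)))) ^ 2) ≤
      2 * Real.exp (-((k : ℝ) ^ 2 * (ℓ : ℝ)) /
        (4 * (n : ℝ) ^ 2 * (1 + c) ^ 2)) := by
  have hn0 : (0:ℝ) < (n:ℝ) := by exact_mod_cast Nat.lt_of_lt_of_le Nat.zero_lt_one hn1
  have hc1 : (0:ℝ) < 1 + c := by linarith
  have hX0 : (0:ℝ) < (n:ℝ)*(1+c) := mul_pos hn0 hc1
  set q : ℝ := 1 / ((n:ℝ)*(1+c)) with hqdef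
  have hq0 : 0 < q := by rw [hqdef]; positivity
  -- part 2
  have part2 : 2 * Real.exp (-(ℓ : ℝ) *
        (1 - Real.exp (-(k : ℝ) / ((n : ℝ) * (1 + c)))) ^ 2) ≤
      2 * Real.exp (-((k : ℝ) ^ 2 * (ℓ : ℝ)) /
        (4 * (n : ℝ) ^ 2 * (1 + c) ^ 2)) := by
    apply mul_le_mul_of_nonneg_left _ (by norm_num : (0:ℝ) ≤ 2)
    rw [Real.exp_le_exp]
    set p : ℝ := (k:ℝ) / ((n:ℝ)*(1+c)) with hpdef
    have hp0 : 0 < p := by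
      rw [hpdef]
      apply div_pos _ hX0
      exact_mod_cast Nat.lt_of_lt_of_le Nat.zero_lt_one hk1
    have hp1 : p ≤ 1 := by
      rw [hpdef, div_le_one hX0]
      have hkr : (k:ℝ) ≤ (n:ℝ) := by exact_mod_cast hkn
      nlinarith
    have hkey : p/2 ≤ 1 - Real.exp (-p) := by
      have h1 : Real.exp (-p) ≤ 1/(1+p) := exp_neg_le_inv (le_of_lt hp0)
      have h2 : 1/(1+p) ≤ 1 - p/2 := by
        rw [div_le_iff₀ (by linarith : (0:ℝ) < 1+p)]
        nlinarith
      linarith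
    have hsq : (p/2)^2 ≤ (1 - Real.exp (-p))^2 := by
      apply pow_le_pow_left₀ (by linarith) hkey
    have heq : (p/2)^2 = (k:ℝ)^2 / (4 * (n:ℝ)^2 * (1+c)^2) := by
      rw [hpdef]
      field_simp
      ring
    have hl0 : (0:ℝ) ≤ (ℓ:ℝ) := Nat.cast_nonneg ℓ
    have h3 : (ℓ:ℝ) * (p/2)^2 ≤ (ℓ:ℝ) * (1 - Real.exp (-p))^2 :=
      mul_le_mul_of_nonneg_left hsq hl0
    have h4 : (ℓ:ℝ) * (p/2)^2 = ((k:ℝ)^2 * (ℓ:ℝ)) / (4 * (n:ℝ)^2 * (1+c)^2) := by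
      rw [heq]; ring
    rw [show -(k:ℝ)/((n:ℝ)*(1+c)) = -p from by rw [hpdef]; ring, neg_div]
    linarith
  -- rewrite LHS as Qsum
  have hLHS : (∑ x ∈ (Finset.univ.filter fun x : Fin k → A =>
        ∀ i j : Fin k, i ≠ j → f (x i) ≠ f (x j)), Pseq x) = Qsum f Pdist ∅ k := by
    rw [Qsum]
    apply Finset.sum_congr
    · apply Finset.filter_congr
      intro x _
      simp
    · intro x hx
      rw [hPseq x]
      apply Finset.prod_congr rfl
      intro t _
      norm_num
  rw [hLHS]
  refine ⟨?_, part2⟩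
  -- part 1
  by_cases hℓ0 : ℓ = 0
  · subst hℓ0
    have h1 : Qsum f Pdist ∅ k ≤ 1 :=
      Qsum_le_one f Pdist hn hq0 hP1 hPlb k ∅ (by simpa using hkn)
    simpa using le_trans h1 (by norm_num : (1:ℝ) ≤ 2)
  · have hℓ1 : 1 ≤ ℓ := Nat.one_le_iff_ne_zero.mpr hℓ0
    have hAne : Nonempty A := by
      rw [← Fintype.card_pos_iff, hn]; omega
    have hBne : Nonempty B := ⟨f (Classical.arbitrary A)⟩
    have hBpos : 1 ≤ Fintype.card B := Fintype.card_pos_iff.mpr hBne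
    have hn2 : 2 ≤ n := by omega
    have hq2 : q ≤ 1/2 := by
      rw [hqdef]
      have hX2 : (2:ℝ) ≤ (n:ℝ)*(1+c) := by
        have : (2:ℝ) ≤ (n:ℝ) := by exact_mod_cast hn2
        nlinarith
      exact one_div_le_one_div_of_le (by norm_num) hX2
    have hmain := main_bound f Pdist n ℓ q hq0 hq2 hn hℓn hB hP1 hPlb k ∅
      (by simp) (by simpa using hkn)
    have hW0 : ((Finset.univ.filter (fun z => z ∉ (∅ : Finset A) ∧
        f z ∈ (∅ : Finset A).image f)).card : ℝ) = 0 := by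
      simp
    rw [hW0, mul_zero, zero_sub] at hmain
    have hLb : (ℓ:ℝ) ≤ (1-q)/q := by
      have h1 : (ℓ:ℝ) ≤ (n:ℝ) - 1 := by
        have : ℓ + 1 ≤ n := by omega
        have h2 : ((ℓ:ℝ) + 1) ≤ (n:ℝ) := by exact_mod_cast this
        linarith
      have h2 : (1-q)/q = (n:ℝ)*(1+c) - 1 := by
        rw [hqdef]
        field_simp
      rw [h2]
      nlinarith
    have hbge := bSeq_ge hq0 hq2 (Nat.cast_nonneg ℓ) hLb k
    have hmono : Real.exp (-(bSeq q (ℓ:ℝ) k)) ≤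
        Real.exp (Real.log 2 - (ℓ:ℝ) * (1 - Real.exp (-((k:ℝ)*q)))^2) := by
      rw [Real.exp_le_exp]
      linarith
    have h2exp : ∀ Y : ℝ, Real.exp (Real.log 2 - Y) = 2 * Real.exp (-Y) := by
      intro Y
      rw [Real.exp_sub, Real.exp_log (by norm_num : (0:ℝ) < 2), Real.exp_neg,
        div_eq_mul_inv]
    have hform : -((k:ℝ)*q) = -(k : ℝ) / ((n : ℝ) * (1 + c)) := by
      rw [hqdef]
      field_simp
    rw [hform] at hmono
    calc Qsum f Pdist ∅ k ≤ Real.exp (-(bSeq q (ℓ:ℝ) k)) := hmain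
      _ ≤ Real.exp (Real.log 2 - (ℓ:ℝ) * (1 - Real.exp (-(k : ℝ) / ((n : ℝ) * (1 + c))))^2) := hmono
      _ = 2 * Real.exp (-((ℓ:ℝ) * (1 - Real.exp (-(k : ℝ) / ((n : ℝ) * (1 + c))))^2)) := h2exp _
      _ = 2 * Real.exp (-(ℓ:ℝ) * (1 - Real.exp (-(k : ℝ) / ((n : ℝ) * (1 + c))))^2) := by
          rw [neg_mul]
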